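/- Let g be C¹, F be C², and suppose x(s,t) = s + F'(g(s))t with u(s) = g(s) and differentiable s₁(t), s₂(t) satisfy x(s₁(t),t) = x(s₂(t),t), u(s₁(t)) ≠ u(s₂(t)), and the Rankine–Hugoniot condition d/dt x(s₁(t),t) = d/dt x(s₂(t),t) = (F(u(s₁(t))) - F(u(s₂(t))))/(u(s₁(t)) - u(s₂(t))) on [t*, T]. Then A(t) := ∫_{s₁(t)}^{s₂(t)} u(s) ∂x/∂s(s,t) ds is constant on [t*, T]. -/

import Mathlib

/-- Converse direction of the equal-area principle: under the Rankine–Hugoniot condition,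
the signed parametric area `A(t) = ∫_{s₁(t)}^{s₂(t)} u(s) x_s(s,t) ds` is constant. -/
theorem rankine_hugoniot_implies_area_constant
    (F g : ℝ → ℝ) (hF : ContDiff ℝ 2 F) (hg : ContDiff ℝ 1 g)
    (x : ℝ → ℝ → ℝ) (hx : ∀ s t, x s t = s + deriv F (g s) * t)
    (tstar T : ℝ) (htT : tstar ≤ T)
    (s₁ s₂ : ℝ → ℝ)
    (hs₁ : DifferentiableOn ℝ s₁ (Set.Icc tstar T))
    (hs₂ : DifferentiableOn ℝ s₂ (Set.Icc tstar T))
    (hjoin : ∀ t ∈ Set.Icc tstar T, x (s₁ t) t = x (s₂ t) t)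
    (hne : ∀ t ∈ Set.Icc tstar T, g (s₁ t) ≠ g (s₂ t))
    (hRH1 : ∀ t ∈ Set.Icc tstar T,
      derivWithin (fun τ => x (s₁ τ) τ) (Set.Icc tstar T) t =
        (F (g (s₁ t)) - F (g (s₂ t))) / (g (s₁ t) - g (s₂ t)))
    (hRH2 : ∀ t ∈ Set.Icc tstar T,
      derivWithin (fun τ => x (s₂ τ) τ) (Set.Icc tstar T) t =
        (F (g (s₁ t)) - F (g (s₂ t))) / (g (s₁ t) - g (s₂ t))) :
    ∀ t₁ ∈ Set.Icc tstar T, ∀ t₂ ∈ Set.Icc tstar T,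
      (∫ s in s₁ t₁..s₂ t₁, g s * (1 + deriv (deriv F) (g s) * deriv g s * t₁)) =
      (∫ s in s₁ t₂..s₂ t₂, g s * (1 + deriv (deriv F) (g s) * deriv g s * t₂)) := by
  intro t₁ ht₁ t₂ ht₂
  -- trivial case tstar = T
  rcases eq_or_lt_of_le htT with hEq | hlt
  · have e1 : t₁ = tstar := le_antisymm (hEq ▸ ht₁.2) ht₁.1
    have e2 : t₂ = tstar := le_antisymm (hEq ▸ ht₂.2) ht₂.1
    rw [e1, e2]
  -- regularity facts
  have hgc : Continuous g := hg.continuous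
  have hgd : Differentiable ℝ g := hg.differentiable one_ne_zero
  have hg'c : Continuous (deriv g) := hg.continuous_deriv le_rfl
  have hF1 : ContDiff ℝ 1 (deriv F) :=
    ((contDiff_succ_iff_deriv (n := 1)).mp (by norm_num at hF ⊢; exact hF)).2.2
  have hFd : Differentiable ℝ F := hF.differentiable (by norm_num)
  have hF'd : Differentiable ℝ (deriv F) := hF1.differentiable one_ne_zero
  have hF'c : Continuous (deriv F) := hF1.continuous
  have hF''c : Continuous (deriv (deriv F)) := hF1.continuous_deriv le_rfl
  set I := Set.Icc tstar T with hI
  have hUD : UniqueDiffOn ℝ I := uniqueDiffOn_Icc hlt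
  -- antiderivatives
  set G₀ : ℝ → ℝ := fun y => ∫ u in (0:ℝ)..y, g u with hG₀
  set Φ : ℝ → ℝ := fun y => g y * deriv F (g y) - F (g y) with hΦ
  have hG₀d : ∀ y, HasDerivAt G₀ (g y) y := fun y =>
    intervalIntegral.integral_hasDerivAt_right (hgc.intervalIntegrable _ _)
      (hgc.stronglyMeasurableAtFilter _ _) hgc.continuousAt
  have hΦd : ∀ y, HasDerivAt Φ (g y * deriv (deriv F) (g y) * deriv g y) y := by
    intro y
    have h1 : HasDerivAt g (deriv g y) y := (hgd y).hasDerivAt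
    have h2 : HasDerivAt (fun z => deriv F (g z)) (deriv (deriv F) (g y) * deriv g y) y :=
      ((hF'd (g y)).hasDerivAt).comp y h1
    have h3 : HasDerivAt (fun z => F (g z)) (deriv F (g y) * deriv g y) y :=
      ((hFd (g y)).hasDerivAt).comp y h1
    have := ((h1.mul h2).sub h3 : HasDerivAt (fun z => g z * deriv F (g z) - F (g z)) _ y)
    exact this.congr_deriv (by ring)
  -- the area integral in closed form
  have hA : ∀ t a b, (∫ s in a..b, g s * (1 + deriv (deriv F) (g s) * deriv g s * t))
      = (G₀ b + t * Φ b) - (G₀ a + t * Φ a) := by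
    intro t a b
    apply intervalIntegral.integral_eq_sub_of_hasDerivAt
    · intro y _
      have h : HasDerivAt (fun z => G₀ z + t * Φ z) _ y := (hG₀d y).add ((hΦd y).const_mul t)
      exact h.congr_deriv (by ring)
    · exact (hgc.mul (continuous_const.add (((hF''c.comp hgc).mul hg'c).mul
        continuous_const))).intervalIntegrable _ _
  set B : ℝ → ℝ := fun t => (G₀ (s₂ t) + t * Φ (s₂ t)) - (G₀ (s₁ t) + t * Φ (s₁ t)) with hB
  -- derivative of B is zero on I
  have hBder : ∀ t ∈ I, HasDerivWithinAt B 0 I t := by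
    intro t ht
    set d₁ := derivWithin s₁ I t with hd₁
    set d₂ := derivWithin s₂ I t with hd₂
    have hS1 : HasDerivWithinAt s₁ d₁ I t := (hs₁ t ht).hasDerivWithinAt
    have hS2 : HasDerivWithinAt s₂ d₂ I t := (hs₂ t ht).hasDerivWithinAt
    set σ : ℝ := (F (g (s₁ t)) - F (g (s₂ t))) / (g (s₁ t) - g (s₂ t)) with hσ
    set c₁ : ℝ := deriv (deriv F) (g (s₁ t)) * deriv g (s₁ t) with hc₁
    set c₂ : ℝ := deriv (deriv F) (g (s₂ t)) * deriv g (s₂ t) with hc₂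
    -- derivWithin of τ ↦ x (sᵢ τ) τ
    have hgs1 : HasDerivWithinAt (fun τ => g (s₁ τ)) (deriv g (s₁ t) * d₁) I t :=
      ((hgd (s₁ t)).hasDerivAt).comp_hasDerivWithinAt t hS1
    have hgs2 : HasDerivWithinAt (fun τ => g (s₂ τ)) (deriv g (s₂ t) * d₂) I t :=
      ((hgd (s₂ t)).hasDerivAt).comp_hasDerivWithinAt t hS2
    have hX1 : HasDerivWithinAt (fun τ => s₁ τ + deriv F (g (s₁ τ)) * τ)
        (d₁ + ((deriv (deriv F) (g (s₁ t)) * (deriv g (s₁ t) * d₁)) * t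
          + deriv F (g (s₁ t)) * 1)) I t := by
      exact hS1.add ((((hF'd (g (s₁ t))).hasDerivAt).comp_hasDerivWithinAt (h := fun τ => g (s₁ τ)) t hgs1 :
          HasDerivWithinAt (fun τ => deriv F (g (s₁ τ)))
            (deriv (deriv F) (g (s₁ t)) * (deriv g (s₁ t) * d₁)) I t).mul
        (hasDerivWithinAt_id t I))
    have hX2 : HasDerivWithinAt (fun τ => s₂ τ + deriv F (g (s₂ τ)) * τ)
        (d₂ + ((deriv (deriv F) (g (s₂ t)) * (deriv g (s₂ t) * d₂)) * t
          + deriv F (g (s₂ t)) * 1)) I t := by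
      exact hS2.add ((((hF'd (g (s₂ t))).hasDerivAt).comp_hasDerivWithinAt (h := fun τ => g (s₂ τ)) t hgs2 :
          HasDerivWithinAt (fun τ => deriv F (g (s₂ τ)))
            (deriv (deriv F) (g (s₂ t)) * (deriv g (s₂ t) * d₂)) I t).mul
        (hasDerivWithinAt_id t I))
    have hfun1 : (fun τ => x (s₁ τ) τ) = fun τ => s₁ τ + deriv F (g (s₁ τ)) * τ :=
      funext fun τ => hx _ _
    have hfun2 : (fun τ => x (s₂ τ) τ) = fun τ => s₂ τ + deriv F (g (s₂ τ)) * τ :=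
      funext fun τ => hx _ _
    have E₁ : d₁ * (1 + t * c₁) = σ - deriv F (g (s₁ t)) := by
      have h := hRH1 t ht
      rw [hfun1] at h
      rw [hX1.derivWithin (hUD t ht)] at h
      rw [hc₁, hσ, ← h]; ring
    have E₂ : d₂ * (1 + t * c₂) = σ - deriv F (g (s₂ t)) := by
      have h := hRH2 t ht
      rw [hfun2] at h
      rw [hX2.derivWithin (hUD t ht)] at h
      rw [hc₂, hσ, ← h]; ring
    -- derivative of B
    have hBd : HasDerivWithinAt B
        ((g (s₂ t) * d₂ + (1 * Φ (s₂ t) + t * (g (s₂ t) * deriv (deriv F) (g (s₂ t)) * deriv g (s₂ t) * d₂)))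
        - (g (s₁ t) * d₁ + (1 * Φ (s₁ t) + t * (g (s₁ t) * deriv (deriv F) (g (s₁ t)) * deriv g (s₁ t) * d₁)))) I t := by
      have h2 := ((hG₀d (s₂ t)).comp_hasDerivWithinAt t hS2).add
        ((hasDerivWithinAt_id t I).mul ((hΦd (s₂ t)).comp_hasDerivWithinAt t hS2))
      have h1 := ((hG₀d (s₁ t)).comp_hasDerivWithinAt t hS1).add
        ((hasDerivWithinAt_id t I).mul ((hΦd (s₁ t)).comp_hasDerivWithinAt t hS1))
      exact h2.sub h1
    have hzero : ((g (s₂ t) * d₂ + (1 * Φ (s₂ t) + t * (g (s₂ t) * deriv (deriv F) (g (s₂ t)) * deriv g (s₂ t) * d₂)))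
        - (g (s₁ t) * d₁ + (1 * Φ (s₁ t) + t * (g (s₁ t) * deriv (deriv F) (g (s₁ t)) * deriv g (s₁ t) * d₁)))) = 0 := by
      have hsub : g (s₁ t) - g (s₂ t) ≠ 0 := sub_ne_zero.mpr (hne t ht)
      have key : (g (s₂ t) * (d₂ * (1 + t * c₂)) - g (s₁ t) * (d₁ * (1 + t * c₁)))
          + (Φ (s₂ t) - Φ (s₁ t)) = 0 := by
        rw [E₁, E₂, hΦ, hσ]
        field_simp
        ring
      rw [hc₁, hc₂] at key
      linear_combination key
    rw [← hzero]; exact hBd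
  have hBdiff : DifferentiableOn ℝ B I := fun t ht => (hBder t ht).differentiableWithinAt
  have hB0 : ∀ t ∈ Set.Ico tstar T, derivWithin B I t = 0 := fun t ht =>
    (hBder t (Set.mem_Icc_of_Ico ht)).derivWithin (hUD t (Set.mem_Icc_of_Ico ht))
  have hconst := constant_of_derivWithin_zero hBdiff hB0
  rw [hA t₁, hA t₂]
  calc (G₀ (s₂ t₁) + t₁ * Φ (s₂ t₁)) - (G₀ (s₁ t₁) + t₁ * Φ (s₁ t₁)) = B t₁ := rfl
    _ = B tstar := hconst t₁ ht₁
    _ = B t₂ := (hconst t₂ ht₂).symm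
    _ = _ := rfl
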